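/- Let K ≥ 2, σ² > 0, 0 < C_1 ≤ … ≤ C_K, R_k^Min > 0 with A_k := 2^{R_k^Min} − 1 and D_k := A_k/(1+A_k), and let a*_k(θ) be defined by a*_k(θ) = D_k·(θ − Σ_{i=1}^{k−1} a*_i(θ)) + D_k·σ²/C_k for k ≤ K−1 and a*_K(θ) = θ − Σ_{i=1}^{K−1} a*_i(θ). Then for every θ with a*_K(θ) ≥ A_K·σ²/C_K, the achievable sum rate at a*(θ) satisfies Σ_{k=1}^K log₂(1 + C_k·a*_k(θ)/(C_k·Σ_{i=k+1}^K a*_i(θ) + σ²)) = Σ_{k=1}^{K−1} R_k^Min + log₂(1 + C_K·a*_K(θ)/σ²). -/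

import Mathlib

/-- At the optimal allocation `a*(θ)` of Theorem 2, the first `K−1` users achieve
exactly their minimum rates, so the achievable sum rate equals
`∑_{k=1}^{K−1} R_k^Min + log₂(1 + C_K a*_K(θ)/σ²)`. -/
theorem stmt_12 (K : ℕ) (hK : 2 ≤ K) (σ2 : ℝ) (hσ : 0 < σ2)
    (C : ℕ → ℝ)
    (hCpos : ∀ k ∈ Finset.Icc 1 K, 0 < C k)
    (hCmono : ∀ k ∈ Finset.Icc 1 (K - 1), C k ≤ C (k + 1))
    (RMin : ℕ → ℝ) (hR : ∀ k ∈ Finset.Icc 1 K, 0 < RMin k)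
    (A : ℕ → ℝ) (hA : ∀ k, A k = (2 : ℝ) ^ RMin k - 1)
    (D : ℕ → ℝ) (hD : ∀ k, D k = A k / (1 + A k))
    (θ : ℝ) (astar : ℕ → ℝ)
    (hastar : ∀ k ∈ Finset.Icc 1 (K - 1),
      astar k = D k * (θ - ∑ i ∈ Finset.Ico 1 k, astar i) + D k * σ2 / C k)
    (hastarK : astar K = θ - ∑ i ∈ Finset.Ico 1 K, astar i)
    (hfeas : A K * (σ2 / C K) ≤ astar K) :
    ∑ k ∈ Finset.Icc 1 K,
        Real.logb 2
          (1 + C k * astar k / (C k * (∑ i ∈ Finset.Ioc k K, astar i) + σ2)) =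
      (∑ k ∈ Finset.Icc 1 (K - 1), RMin k) +
        Real.logb 2 (1 + C K * astar K / σ2) := by
  -- basic positivity facts
  have hApos : ∀ k ∈ Finset.Icc 1 K, 0 < A k := by
    intro k hk
    have hRk := hR k hk
    have h1 : (1 : ℝ) < (2 : ℝ) ^ RMin k :=
      (Real.one_lt_rpow_iff_of_pos (by norm_num)).mpr (Or.inl ⟨by norm_num, hRk⟩)
    rw [hA]; linarith
  have hDpos : ∀ k ∈ Finset.Icc 1 K, 0 < D k := by
    intro k hk
    have hAk := hApos k hk
    rw [hD]; positivity
  have hDlt : ∀ k ∈ Finset.Icc 1 K, D k < 1 := by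
    intro k hk
    have hAk := hApos k hk
    rw [hD, div_lt_one (by linarith)]; linarith
  -- the "remaining power" function
  set T : ℕ → ℝ := fun k => θ - ∑ i ∈ Finset.Ico 1 k, astar i with hT
  have hTK : T K = astar K := by simp [hT, hastarK]
  have hTKpos : 0 < T K := by
    rw [hTK]
    have hAK := hApos K (by simp; omega)
    have hCK := hCpos K (by simp; omega)
    have : 0 < A K * (σ2 / C K) := by positivity
    linarith
  -- recurrence: for 1 ≤ k ≤ K-1, T (k+1) = T k - astar k
  have hTrec : ∀ k ∈ Finset.Icc 1 (K - 1), T (k + 1) = T k - astar k := by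
    intro k hk
    simp only [Finset.mem_Icc] at hk
    simp only [hT]
    rw [Finset.sum_Ico_succ_top hk.1]
    ring
  -- positivity of T by downward induction
  have hTpos : ∀ m k, 1 ≤ k → k + m = K → 0 < T k := by
    intro m
    induction m with
    | zero => intro k hk1 hkK; simpa [← hkK] using hTKpos
    | succ n ih =>
      intro k hk1 hkK
      have hkmem : k ∈ Finset.Icc 1 (K - 1) := by simp; omega
      have hkmem' : k ∈ Finset.Icc 1 K := by simp; omega
      have hnext : 0 < T (k + 1) := ih (k + 1) (by omega) (by omega)
      have hrec := hTrec k hkmem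
      have hak := hastar k hkmem
      have hDk := hDpos k hkmem'
      have hDk1 := hDlt k hkmem'
      have hCk := hCpos k hkmem'
      have hTk : T k * (1 - D k) = T (k + 1) + D k * σ2 / C k := by
        rw [hrec, hak]; simp only [hT]; ring
      have hpos : 0 < T (k + 1) + D k * σ2 / C k := by positivity
      have hTkeq : T k = (T (k + 1) + D k * σ2 / C k) / (1 - D k) := by
        rw [eq_div_iff (by linarith)]; linarith [hTk]
      rw [hTkeq]
      exact div_pos hpos (by linarith)
  have hTpos' : ∀ k, 1 ≤ k → k ≤ K → 0 < T k := by
    intro k h1 h2; exact hTpos (K - k) k h1 (by omega)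
  -- total sum of astar over Icc 1 K equals θ
  have hsumθ : ∑ i ∈ Finset.Icc 1 K, astar i = θ := by
    have : Finset.Icc 1 K = Finset.Ico 1 (K + 1) := by
      rw [Finset.Ico_add_one_right_eq_Icc]
    rw [this, Finset.sum_Ico_succ_top (by omega), hastarK]
    ring
  -- tail sums: ∑_{Ioc k K} astar = T (k+1)
  have htail : ∀ k, 1 ≤ k → k ≤ K → ∑ i ∈ Finset.Ioc k K, astar i = T (k + 1) := by
    intro k h1 h2
    have hsplit := Finset.sum_Ioc_consecutive astar (Nat.zero_le k) h2
    have h0 : ∀ n, Finset.Ioc 0 n = Finset.Icc 1 n := by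
      intro n; rw [← Finset.Icc_add_one_left_eq_Ioc, zero_add]
    rw [h0, h0] at hsplit
    have hIcck : ∑ i ∈ Finset.Icc 1 k, astar i = ∑ i ∈ Finset.Ico 1 (k + 1), astar i := by
      rw [Finset.Ico_add_one_right_eq_Icc]
    simp only [hT]
    rw [← hsumθ]
    linarith [hsplit, hIcck]
  -- per-term computation for k ≤ K - 1
  have hterm : ∀ k ∈ Finset.Icc 1 (K - 1),
      Real.logb 2 (1 + C k * astar k / (C k * (∑ i ∈ Finset.Ioc k K, astar i) + σ2))
        = RMin k := by
    intro k hk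
    simp only [Finset.mem_Icc] at hk
    have hkmem : k ∈ Finset.Icc 1 (K - 1) := by simp; omega
    have hkmem' : k ∈ Finset.Icc 1 K := by simp; omega
    have hCk := hCpos k hkmem'
    have hDk := hDpos k hkmem'
    have hDk1 := hDlt k hkmem'
    have hAk := hApos k hkmem'
    have hTk := hTpos' k hk.1 (by omega)
    have hak := hastar k hkmem
    have hrec := hTrec k hkmem
    have htl := htail k hk.1 (by omega)
    rw [htl, hrec]
    -- compute the argument
    have harg : 1 + C k * astar k / (C k * (T k - astar k) + σ2) = (2 : ℝ) ^ RMin k := by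
      have hden : C k * (T k - astar k) + σ2 = (1 - D k) * (C k * T k + σ2) := by
        rw [hak]; simp only [hT]; field_simp; ring
      have hnum : C k * astar k = D k * (C k * T k + σ2) := by
        rw [hak]; simp only [hT]; field_simp
      have hbase : 0 < C k * T k + σ2 := by positivity
      rw [hden, hnum, div_mul_eq_div_div_swap, mul_div_assoc,
        div_self (ne_of_gt hbase), mul_one]
      have : D k / (1 - D k) = A k := by
        rw [hD]; field_simp; ring
      rw [this, hA]; ring
    rw [harg, Real.logb_rpow (by norm_num) (by norm_num)]
  -- split the sum
  have hsplit : ∑ k ∈ Finset.Icc 1 K,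
      Real.logb 2 (1 + C k * astar k / (C k * (∑ i ∈ Finset.Ioc k K, astar i) + σ2))
      = (∑ k ∈ Finset.Icc 1 (K - 1),
          Real.logb 2 (1 + C k * astar k / (C k * (∑ i ∈ Finset.Ioc k K, astar i) + σ2)))
        + Real.logb 2 (1 + C K * astar K / (C K * (∑ i ∈ Finset.Ioc K K, astar i) + σ2)) := by
    have hK1 : K - 1 + 1 = K := by omega
    conv_lhs => rw [← hK1]
    rw [Finset.sum_Icc_succ_top (by omega), hK1]
  rw [hsplit, Finset.sum_congr rfl hterm]
  congr 1
  simp
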